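/- Let C be a non-hyperelliptic smooth curve of genus g ≥ 4 with canonical embedding φ: C → P^{g-1}. Let Q ∈ I_2(K_C) be a quadric of rank 4 containing the canonical curve, determined by a line bundle L and pencils U ⊂ H^0(L), W ⊂ H^0(K_C - L) with U = ⟨s_0, s_1⟩, W = ⟨t_0, t_1⟩, so that Q = s_0t_0 ⊙ s_1t_1 - s_0t_1 ⊙ s_1t_0. Then the zero locus of the associated section of K_{C×C} in C × C equals {(p,q) : f(p) = f(q)} ∪ {(p,q) : g(p) = g(q)} ∪ ((B_f ∪ B_g) × C) ∪ (C × (B_f ∪ B_g)), where f and g are the maps to P^1 given by the pencils U and W, and B_f, B_g are their base loci. -/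
import Mathlib


/-- `C` is a non-hyperelliptic curve of genus `g ≥ 4` with point
set `Point`; sections of line bundles on `C` are represented by functions
`Point → ℂ` via fixed local trivialisations.  A rank `4` quadric
`Q = s₀t₀ ⊙ s₁t₁ - s₀t₁ ⊙ s₁t₀ ∈ I₂(K_C)` is given by pencils
`U = ⟨s₀, s₁⟩ ⊂ H⁰(L)` and `W = ⟨t₀, t₁⟩ ⊂ H⁰(K_C - L)`; the associated
section `Q̃` of `K_{C×C}` is `Q̃(p,q) = s₀t₀(p)·s₁t₁(q) + s₁t₁(p)·s₀t₀(q)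
- s₀t₁(p)·s₁t₀(q) - s₁t₀(p)·s₀t₁(q)`.  Its zero locus in `C × C` is
`{f(p) = f(q)} ∪ {g(p) = g(q)} ∪ (B_f ∪ B_g) × C ∪ C × (B_f ∪ B_g)`, where
`f, g : C → ℙ¹` are the maps given by the two pencils and `B_f, B_g` their
base loci. -/
theorem zero_locus_rank_four_quadric
    (Point : Type)                                  -- the points of the curve C
    (g : ℕ) (hg : 4 ≤ g)                            -- the genus of C
    (NonHyperelliptic : Prop) (hnh : NonHyperelliptic)
    (s0 s1 : Point → ℂ) (hs : ¬ ∃ c : ℂ, (∀ p, s1 p = c * s0 p) ∨ ∀ p, s0 p = c * s1 p)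
    (t0 t1 : Point → ℂ) (ht : ¬ ∃ c : ℂ, (∀ p, t1 p = c * t0 p) ∨ ∀ p, t0 p = c * t1 p)
    (Qt : Point → Point → ℂ)                        -- the section of K_{C×C} given by Q
    (hQt : ∀ p q, Qt p q =
      s0 p * t0 p * (s1 q * t1 q) + s1 p * t1 p * (s0 q * t0 q)
        - s0 p * t1 p * (s1 q * t0 q) - s1 p * t0 p * (s0 q * t1 q))
    (Bf : Set Point) (hBf : Bf = {p | s0 p = 0 ∧ s1 p = 0})   -- base locus of f
    (Bg : Set Point) (hBg : Bg = {p | t0 p = 0 ∧ t1 p = 0})   -- base locus of g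
    (feq geq : Point → Point → Prop)
    -- `feq p q` means `p, q` are not base points of the pencil `U` and
    -- `f(p) = f(q)` in `ℙ¹`, i.e. `(s₀(p) : s₁(p)) = (s₀(q) : s₁(q))`
    (hfeq : ∀ p q, feq p q ↔ p ∉ Bf ∧ q ∉ Bf ∧ s0 p * s1 q = s1 p * s0 q)
    (hgeq : ∀ p q, geq p q ↔ p ∉ Bg ∧ q ∉ Bg ∧ t0 p * t1 q = t1 p * t0 q) :
    {pq : Point × Point | Qt pq.1 pq.2 = 0} =
      {pq : Point × Point | feq pq.1 pq.2} ∪ {pq : Point × Point | geq pq.1 pq.2}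
        ∪ (Bf ∪ Bg) ×ˢ (Set.univ : Set Point)
        ∪ (Set.univ : Set Point) ×ˢ (Bf ∪ Bg) := by
  ext ⟨p, q⟩
  have key : Qt p q = (s0 p * s1 q - s1 p * s0 q) * (t0 p * t1 q - t1 p * t0 q) := by
    rw [hQt]; ring
  simp only [Set.mem_setOf_eq, Set.mem_union, Set.mem_prod, Set.mem_univ, and_true, true_and,
    key, mul_eq_zero, sub_eq_zero, hfeq, hgeq, hBf, hBg]
  constructor
  · rintro (h | h)
    · by_cases hp : s0 p = 0 ∧ s1 p = 0
      · tauto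
      · by_cases hq : s0 q = 0 ∧ s1 q = 0
        · tauto
        · exact Or.inl (Or.inl (Or.inl ⟨hp, hq, h⟩))
    · by_cases hp : t0 p = 0 ∧ t1 p = 0
      · tauto
      · by_cases hq : t0 q = 0 ∧ t1 q = 0
        · tauto
        · exact Or.inl (Or.inl (Or.inr ⟨hp, hq, h⟩))
  · rintro (((⟨_, _, h⟩ | ⟨_, _, h⟩) | (⟨h1, h2⟩ | ⟨h1, h2⟩)) | (⟨h1, h2⟩ | ⟨h1, h2⟩))
    · exact Or.inl h
    · exact Or.inr h
    · left; rw [h1, h2]; ring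
    · right; rw [h1, h2]; ring
    · left; rw [h1, h2]; ring
    · right; rw [h1, h2]; ring
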